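/- Let V be a finite-dimensional complex inner product space, let H' and B be self-adjoint linear endomorphisms of V, set H := H' + B, and let M ∈ ℝ be such that every eigenvalue of H' is strictly greater than −M. Define H̄' := H'·E^{H'}((−M,M)) + M·E^{H'}([M,∞)) and H̄ := H̄' + B. Then for all real numbers δ > ε ≥ 0 and every ξ ∈ ℝ, ‖(id_V − E^H((ξ−δ, ξ+δ)))·E^{H̄}([ξ−ε, ξ+ε])‖ ≤ (1/δ)·( ε + (M + ‖B‖ + |ξ| + δ)·‖(id_V − E^{H'}((−M,M)))·E^{H̄}([ξ−ε, ξ+ε])‖ ). -/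

import Mathlib

/-- The spectral projection `E^T(I)` of an endomorphism `T` of a finite-dimensional
complex inner product space: the orthogonal projection onto the span of all
eigenvectors of `T` whose eigenvalue lies in `I ⊆ ℝ`. -/
noncomputable def specProj {V : Type*} [NormedAddCommGroup V] [InnerProductSpace ℂ V]
    [FiniteDimensional ℂ V] (T : V →L[ℂ] V) (I : Set ℝ) : V →L[ℂ] V :=
  (⨆ μ ∈ I, Module.End.eigenspace (↑T : V →ₗ[ℂ] V) (μ : ℂ)).subtypeL.comp
    (Submodule.orthogonalProjection (⨆ μ ∈ I, Module.End.eigenspace (↑T : V →ₗ[ℂ] V) (μ : ℂ)))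

/-- The energy-truncated operator `T̄ := T·E^T((−M,M)) + M·E^T([M,∞))`. -/
noncomputable def etrunc {V : Type*} [NormedAddCommGroup V] [InnerProductSpace ℂ V]
    [FiniteDimensional ℂ V] (T : V →L[ℂ] V) (M : ℝ) : V →L[ℂ] V :=
  T * specProj T (Set.Ioo (-M) M) + (M : ℂ) • specProj T (Set.Ici M)

open scoped InnerProductSpace Classical

theorem specProj_basis {V : Type*} [NormedAddCommGroup V] [InnerProductSpace ℂ V]
    [FiniteDimensional ℂ V] {n : ℕ} (T : V →L[ℂ] V) (hT : IsSelfAdjoint T)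
    (b : OrthonormalBasis (Fin n) ℂ V) (μ : Fin n → ℝ)
    (hb : ∀ j, T (b j) = (μ j : ℂ) • b j) (I : Set ℝ) (j : Fin n) :
    specProj T I (b j) = if μ j ∈ I then b j else 0 := by
  set K := ⨆ ν ∈ I, Module.End.eigenspace (↑T : V →ₗ[ℂ] V) (ν : ℂ) with hK
  by_cases h : μ j ∈ I
  · have hmem : b j ∈ K := by
      refine Submodule.mem_iSup_of_mem (μ j) (Submodule.mem_iSup_of_mem h ?_)
      rw [Module.End.mem_eigenspace_iff]
      exact hb j
    simp only [specProj, if_pos h, ContinuousLinearMap.coe_comp', Function.comp_apply,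
      Submodule.coe_subtypeL', Submodule.coe_subtype]
    exact Submodule.starProjection_eq_self_iff.2 hmem
  · have horth : b j ∈ Kᗮ := by
      have hle : K ≤ (ℂ ∙ (b j))ᗮ := by
        refine iSup₂_le fun ν hν => fun v hv => ?_
        rw [Submodule.mem_orthogonal_singleton_iff_inner_right]
        have h1 : ⟪T (b j), v⟫_ℂ = ⟪b j, (↑T : V →ₗ[ℂ] V) v⟫_ℂ := hT.isSymmetric _ _
        rw [Module.End.mem_eigenspace_iff] at hv
        rw [hv, hb j, inner_smul_left, inner_smul_right, Complex.conj_ofReal] at h1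
        have hne : ((μ j : ℂ)) ≠ (ν : ℂ) := by
          simp only [ne_eq, Complex.ofReal_inj]
          rintro rfl; exact h hν
        by_contra hz
        exact hne (mul_right_cancel₀ hz h1)
      rw [Submodule.mem_orthogonal]
      intro u hu
      have h2 := hle hu
      rw [Submodule.mem_orthogonal_singleton_iff_inner_right] at h2
      rw [← inner_eq_zero_symm] at h2
      exact h2
    simp only [specProj, if_neg h, ContinuousLinearMap.coe_comp', Function.comp_apply,
      Submodule.coe_subtypeL', Submodule.coe_subtype]
    rw [Submodule.orthogonalProjectionOnto_apply_of_mem_orthogonal horth]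
    simp

theorem specProj_repr {V : Type*} [NormedAddCommGroup V] [InnerProductSpace ℂ V]
    [FiniteDimensional ℂ V] {n : ℕ} (T : V →L[ℂ] V) (hT : IsSelfAdjoint T)
    (b : OrthonormalBasis (Fin n) ℂ V) (μ : Fin n → ℝ)
    (hb : ∀ j, T (b j) = (μ j : ℂ) • b j) (I : Set ℝ) (x : V) (k : Fin n) :
    b.repr (specProj T I x) k = if μ k ∈ I then b.repr x k else 0 := by
  have hx : specProj T I x = ∑ j, b.repr x j • (if μ j ∈ I then b j else 0) := by
    conv_lhs => rw [← b.sum_repr x, map_sum]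
    refine Finset.sum_congr rfl fun j _ => ?_
    rw [map_smul, specProj_basis T hT b μ hb I j]
  rw [hx, b.repr_apply_apply, inner_sum]
  simp only [inner_smul_right, apply_ite (inner ℂ (b k)), inner_zero_right,
    orthonormal_iff_ite.1 b.orthonormal]
  rw [Finset.sum_congr rfl (g := fun j => if k = j then (if μ j ∈ I then b.repr x j else 0) else 0)
    (fun j _ => by split_ifs with h1 h2 <;> simp_all [b.repr_apply_apply])]
  simp [Finset.sum_ite_eq]

theorem apply_repr {V : Type*} [NormedAddCommGroup V] [InnerProductSpace ℂ V]
    [FiniteDimensional ℂ V] {n : ℕ} (T : V →L[ℂ] V)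
    (b : OrthonormalBasis (Fin n) ℂ V) (μ : Fin n → ℝ)
    (hb : ∀ j, T (b j) = (μ j : ℂ) • b j) (x : V) (k : Fin n) :
    b.repr (T x) k = (μ k : ℂ) * b.repr x k := by
  have hx : T x = ∑ j, b.repr x j • ((μ j : ℂ) • b j) := by
    conv_lhs => rw [← b.sum_repr x, map_sum]
    refine Finset.sum_congr rfl fun j _ => ?_
    rw [map_smul, hb j]
  rw [hx, b.repr_apply_apply, inner_sum]
  simp only [inner_smul_right, orthonormal_iff_ite.1 b.orthonormal]
  rw [Finset.sum_congr rfl (g := fun j => if k = j then (μ j : ℂ) * b.repr x j else 0)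
    (fun j _ => by split_ifs with h1 <;> simp_all [b.repr_apply_apply]; ring)]
  simp [Finset.sum_ite_eq]

theorem norm_sq_repr {V : Type*} [NormedAddCommGroup V] [InnerProductSpace ℂ V]
    [FiniteDimensional ℂ V] {n : ℕ} (b : OrthonormalBasis (Fin n) ℂ V) (x : V) :
    ‖x‖ ^ 2 = ∑ k, ‖b.repr x k‖ ^ 2 := by
  rw [← b.repr.norm_map x, EuclideanSpace.norm_eq, Real.sq_sqrt (by positivity)]

theorem coord_dom {V : Type*} [NormedAddCommGroup V] [InnerProductSpace ℂ V]
    [FiniteDimensional ℂ V] {n : ℕ} (b : OrthonormalBasis (Fin n) ℂ V) (y z : V)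
    {c : ℝ} (hc : 0 ≤ c) (h : ∀ k, ‖b.repr y k‖ ≤ c * ‖b.repr z k‖) : ‖y‖ ≤ c * ‖z‖ := by
  have h2 : ‖y‖ ^ 2 ≤ (c * ‖z‖) ^ 2 := by
    rw [norm_sq_repr b y, mul_pow, norm_sq_repr b z, Finset.mul_sum]
    refine Finset.sum_le_sum fun k _ => ?_
    have := h k
    nlinarith [norm_nonneg (b.repr y k), norm_nonneg (b.repr z k)]
  nlinarith [norm_nonneg y, mul_nonneg hc (norm_nonneg z)]

theorem exists_eigen {V : Type*} [NormedAddCommGroup V] [InnerProductSpace ℂ V]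
    [FiniteDimensional ℂ V] (T : V →L[ℂ] V) (hT : IsSelfAdjoint T) :
    ∃ (b : OrthonormalBasis (Fin (Module.finrank ℂ V)) ℂ V) (μ : Fin (Module.finrank ℂ V) → ℝ),
      (∀ j, T (b j) = (μ j : ℂ) • b j) ∧
      (∀ j, Module.End.HasEigenvalue (↑T : V →ₗ[ℂ] V) ((μ j : ℂ))) := by
  have hn : Module.finrank ℂ V = Module.finrank ℂ V := rfl
  exact ⟨hT.isSymmetric.eigenvectorBasis hn, hT.isSymmetric.eigenvalues hn,
    fun j => hT.isSymmetric.apply_eigenvectorBasis hn j,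
    fun j => hT.isSymmetric.hasEigenvalue_eigenvalues hn j⟩

theorem norm_specProj_apply_le {V : Type*} [NormedAddCommGroup V] [InnerProductSpace ℂ V]
    [FiniteDimensional ℂ V] (T : V →L[ℂ] V) (I : Set ℝ) (x : V) :
    ‖specProj T I x‖ ≤ ‖x‖ := by
  set K := ⨆ ν ∈ I, Module.End.eigenspace (↑T : V →ₗ[ℂ] V) (ν : ℂ)
  show ‖(Submodule.orthogonalProjection K x : V)‖ ≤ ‖x‖
  rw [Submodule.norm_coe]
  exact ((Submodule.orthogonalProjection K).le_opNorm x).trans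
    (by nlinarith [Submodule.orthogonalProjectionOnto_norm_le K, norm_nonneg x])

theorem norm_sub_specProj_le {V : Type*} [NormedAddCommGroup V] [InnerProductSpace ℂ V]
    [FiniteDimensional ℂ V] (T : V →L[ℂ] V) (hT : IsSelfAdjoint T) (I : Set ℝ) (x : V) :
    ‖x - specProj T I x‖ ≤ ‖x‖ := by
  obtain ⟨b, μ, hb, -⟩ := exists_eigen T hT
  have := coord_dom b (x - specProj T I x) x (c := 1) zero_le_one (fun k => by
    rw [map_sub]
    show ‖b.repr x k - b.repr (specProj T I x) k‖ ≤ 1 * ‖b.repr x k‖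
    rw [specProj_repr T hT b μ hb I x k, one_mul]
    split_ifs with h <;> simp)
  simpa using this

theorem gap_bound {V : Type*} [NormedAddCommGroup V] [InnerProductSpace ℂ V]
    [FiniteDimensional ℂ V] (T : V →L[ℂ] V) (hT : IsSelfAdjoint T) {δ ξ : ℝ} (hδ : 0 < δ)
    (y : V) :
    ‖y - specProj T (Set.Ioo (ξ - δ) (ξ + δ)) y‖ ≤ (1 / δ) * ‖T y - (ξ : ℂ) • y‖ := by
  obtain ⟨b, μ, hb, -⟩ := exists_eigen T hT
  refine coord_dom b _ _ (by positivity) (fun k => ?_)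
  rw [map_sub]
  show ‖b.repr y k - b.repr (specProj T (Set.Ioo (ξ - δ) (ξ + δ)) y) k‖ ≤
    1 / δ * ‖b.repr (T y - (ξ : ℂ) • y) k‖
  have e2 : b.repr (T y - (ξ : ℂ) • y) k = ((μ k : ℂ) - ξ) * b.repr y k := by
    rw [map_sub]
    show b.repr (T y) k - b.repr ((ξ : ℂ) • y) k = _
    rw [apply_repr T b μ hb y k, map_smul]
    show _ - (ξ : ℂ) • b.repr y k = _
    rw [smul_eq_mul]; ring
  rw [specProj_repr T hT b μ hb _ y k, e2]
  split_ifs with h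
  · simp only [sub_self, norm_zero]
    positivity
  · rw [sub_zero, norm_mul]
    have h1 : δ ≤ ‖((μ k : ℂ) - (ξ : ℂ))‖ := by
      rw [← Complex.ofReal_sub, Complex.norm_real]
      rw [Set.mem_Ioo, not_and_or, not_lt, not_lt] at h
      rcases h with h | h
      · calc δ ≤ ξ - μ k := by linarith
          _ ≤ |ξ - μ k| := le_abs_self _
          _ = |μ k - ξ| := abs_sub_comm _ _
      · calc δ ≤ μ k - ξ := by linarith
          _ ≤ |μ k - ξ| := le_abs_self _
    calc ‖b.repr y k‖ = (1 / δ) * (δ * ‖b.repr y k‖) := by field_simp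
      _ ≤ (1 / δ) * (‖((μ k : ℂ) - (ξ : ℂ))‖ * ‖b.repr y k‖) := by
          have h0 : (0:ℝ) ≤ 1 / δ := by positivity
          have := mul_le_mul_of_nonneg_right h1 (norm_nonneg (b.repr y k))
          nlinarith [norm_nonneg (b.repr y k)]
      _ = _ := rfl

theorem icc_bound {V : Type*} [NormedAddCommGroup V] [InnerProductSpace ℂ V]
    [FiniteDimensional ℂ V] (T : V →L[ℂ] V) (hT : IsSelfAdjoint T) {ε ξ : ℝ} (hε : 0 ≤ ε)
    (x : V) :
    ‖T (specProj T (Set.Icc (ξ - ε) (ξ + ε)) x) -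
        (ξ : ℂ) • specProj T (Set.Icc (ξ - ε) (ξ + ε)) x‖ ≤
      ε * ‖specProj T (Set.Icc (ξ - ε) (ξ + ε)) x‖ := by
  obtain ⟨b, μ, hb, -⟩ := exists_eigen T hT
  set y := specProj T (Set.Icc (ξ - ε) (ξ + ε)) x with hy
  refine coord_dom b _ _ hε (fun k => ?_)
  have e2 : b.repr (T y - (ξ : ℂ) • y) k = ((μ k : ℂ) - ξ) * b.repr y k := by
    rw [map_sub]
    show b.repr (T y) k - b.repr ((ξ : ℂ) • y) k = _
    rw [apply_repr T b μ hb y k, map_smul]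
    show _ - (ξ : ℂ) • b.repr y k = _
    rw [smul_eq_mul]; ring
  rw [e2, norm_mul]
  have hyk := specProj_repr T hT b μ hb (Set.Icc (ξ - ε) (ξ + ε)) x k
  by_cases h : μ k ∈ Set.Icc (ξ - ε) (ξ + ε)
  · have h1 : ‖((μ k : ℂ) - (ξ : ℂ))‖ ≤ ε := by
      rw [← Complex.ofReal_sub, Complex.norm_real, Real.norm_eq_abs]
      rw [Set.mem_Icc] at h
      rw [abs_le]; constructor <;> linarith
    nlinarith [norm_nonneg (b.repr y k), norm_nonneg ((μ k : ℂ) - (ξ : ℂ))]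
  · rw [hyk, if_neg h]
    simp

theorem specProj_idem {V : Type*} [NormedAddCommGroup V] [InnerProductSpace ℂ V]
    [FiniteDimensional ℂ V] (T : V →L[ℂ] V) (hT : IsSelfAdjoint T) (I : Set ℝ) (x : V) :
    specProj T I (specProj T I x) = specProj T I x := by
  obtain ⟨b, μ, hb, -⟩ := exists_eigen T hT
  apply b.repr.injective
  ext k
  rw [specProj_repr T hT b μ hb I _ k, specProj_repr T hT b μ hb I x k]
  split_ifs with h <;> simp [specProj_repr T hT b μ hb I x k, h]

theorem specProj_disj {V : Type*} [NormedAddCommGroup V] [InnerProductSpace ℂ V]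
    [FiniteDimensional ℂ V] (T : V →L[ℂ] V) (hT : IsSelfAdjoint T) {I J : Set ℝ}
    (hIJ : ∀ ν, ν ∈ I → ν ∈ J → False) (x : V) :
    specProj T I (specProj T J x) = 0 := by
  obtain ⟨b, μ, hb, -⟩ := exists_eigen T hT
  apply b.repr.injective
  ext k
  rw [specProj_repr T hT b μ hb I _ k]
  rw [specProj_repr T hT b μ hb J x k]
  split_ifs with h1 h2
  · exact (hIJ _ h1 h2).elim
  all_goals simp

theorem specProj_comm_apply {V : Type*} [NormedAddCommGroup V] [InnerProductSpace ℂ V]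
    [FiniteDimensional ℂ V] (T : V →L[ℂ] V) (hT : IsSelfAdjoint T) (I : Set ℝ) (x : V) :
    specProj T I (T x) = T (specProj T I x) := by
  obtain ⟨b, μ, hb, -⟩ := exists_eigen T hT
  apply b.repr.injective
  ext k
  rw [specProj_repr T hT b μ hb I (T x) k, apply_repr T b μ hb x k,
    apply_repr T b μ hb (specProj T I x) k, specProj_repr T hT b μ hb I x k]
  split_ifs with h <;> simp

theorem specProj_compl {V : Type*} [NormedAddCommGroup V] [InnerProductSpace ℂ V]
    [FiniteDimensional ℂ V] (T : V →L[ℂ] V) (hT : IsSelfAdjoint T) {M : ℝ}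
    (hM : ∀ μ : ℝ, Module.End.HasEigenvalue (↑T : V →ₗ[ℂ] V) (μ : ℂ) → -M < μ) (x : V) :
    specProj T (Set.Ici M) x = x - specProj T (Set.Ioo (-M) M) x := by
  obtain ⟨b, μ, hb, hev⟩ := exists_eigen T hT
  apply b.repr.injective
  ext k
  rw [specProj_repr T hT b μ hb _ x k, map_sub]
  show _ = b.repr x k - b.repr (specProj T (Set.Ioo (-M) M) x) k
  rw [specProj_repr T hT b μ hb _ x k]
  have hμk : -M < μ k := hM _ (hev k)
  by_cases h : μ k < M
  · rw [if_neg (by simp [Set.mem_Ici]; linarith), if_pos (Set.mem_Ioo.2 ⟨hμk, h⟩)]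
    simp
  · rw [if_pos (Set.mem_Ici.2 (by linarith)), if_neg (by simp [Set.mem_Ioo]; intro; linarith)]
    simp

theorem specProj_isSelfAdjoint {V : Type*} [NormedAddCommGroup V] [InnerProductSpace ℂ V]
    [FiniteDimensional ℂ V] (T : V →L[ℂ] V) (I : Set ℝ) :
    IsSelfAdjoint (specProj T I) :=
  isSelfAdjoint_starProjection _

theorem etrunc_isSelfAdjoint {V : Type*} [NormedAddCommGroup V] [InnerProductSpace ℂ V]
    [FiniteDimensional ℂ V] (T : V →L[ℂ] V) (hT : IsSelfAdjoint T) (M : ℝ) :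
    IsSelfAdjoint (etrunc T M) := by
  refine IsSelfAdjoint.add ?_ ?_
  · show star _ = _
    rw [star_mul, hT.star_eq, (specProj_isSelfAdjoint T (Set.Ioo (-M) M)).star_eq]
    ext x
    show specProj T (Set.Ioo (-M) M) (T x) = T (specProj T (Set.Ioo (-M) M) x)
    exact specProj_comm_apply T hT _ x
  · show star _ = _
    rw [star_smul, (specProj_isSelfAdjoint T (Set.Ici M)).star_eq]
    congr 1
    simp [Complex.star_def, Complex.conj_ofReal]

theorem specProj_empty {V : Type*} [NormedAddCommGroup V] [InnerProductSpace ℂ V]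
    [FiniteDimensional ℂ V] (T : V →L[ℂ] V) {I : Set ℝ} (hI : I = ∅) :
    specProj T I = 0 := by
  subst hI
  ext x
  simp [specProj, iSup_emptyset, Submodule.orthogonalProjectionOnto_bot]

theorem etrunc_apply {V : Type*} [NormedAddCommGroup V] [InnerProductSpace ℂ V]
    [FiniteDimensional ℂ V] (T : V →L[ℂ] V) (M : ℝ) (x : V) :
    etrunc T M x = T (specProj T (Set.Ioo (-M) M) x) + (M : ℂ) • specProj T (Set.Ici M) x := by
  rw [etrunc]
  rfl

set_option maxHeartbeats 2000000 in
/-- Shifted decomposition estimate: with `H = H' + B`, `H̄' := etrunc H' M`,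
`H̄ := H̄' + B`, for `δ > ε ≥ 0` and `ξ ∈ ℝ`,
`‖(I − E^H((ξ−δ,ξ+δ)))·E^{H̄}([ξ−ε,ξ+ε])‖
  ≤ (1/δ)(ε + (M+‖B‖+|ξ|+δ)·‖(I − E^{H'}((−M,M)))·E^{H̄}([ξ−ε,ξ+ε])‖)`. -/
theorem stmt_11 {V : Type*} [NormedAddCommGroup V] [InnerProductSpace ℂ V]
    [FiniteDimensional ℂ V]
    (H' B : V →L[ℂ] V) (hH' : IsSelfAdjoint H') (hB : IsSelfAdjoint B)
    (M : ℝ) (hM : ∀ μ : ℝ, Module.End.HasEigenvalue (↑H' : V →ₗ[ℂ] V) (μ : ℂ) → -M < μ) :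
    ∀ (ε δ ξ : ℝ), 0 ≤ ε → ε < δ →
      ‖((1 : V →L[ℂ] V) - specProj (H' + B) (Set.Ioo (ξ - δ) (ξ + δ))) *
          specProj (etrunc H' M + B) (Set.Icc (ξ - ε) (ξ + ε))‖ ≤
        (1 / δ) * (ε + (M + ‖B‖ + |ξ| + δ) *
          ‖((1 : V →L[ℂ] V) - specProj H' (Set.Ioo (-M) M)) *
              specProj (etrunc H' M + B) (Set.Icc (ξ - ε) (ξ + ε))‖) := by
  intro ε δ ξ hε hεδ
  have hδ : 0 < δ := lt_of_le_of_lt hε hεδ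
  have hHsa : IsSelfAdjoint (H' + B) := hH'.add hB
  have hHbsa : IsSelfAdjoint (etrunc H' M + B) := (etrunc_isSelfAdjoint H' hH' M).add hB
  -- etrunc agrees with H' on the range of P'
  have hE1 : ∀ y : V, etrunc H' M (specProj H' (Set.Ioo (-M) M) y) =
      H' (specProj H' (Set.Ioo (-M) M) y) := by
    intro y
    rw [etrunc_apply, specProj_idem H' hH' (Set.Ioo (-M) M) y,
      specProj_disj H' hH' (I := Set.Ici M) (J := Set.Ioo (-M) M)
        (fun ν h1 h2 => absurd h2.2 (not_lt.2 h1)) y, smul_zero, add_zero]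
  -- etrunc acts as multiplication by M on the kernel of P'
  have hE2 : ∀ z : V, specProj H' (Set.Ioo (-M) M) z = 0 → etrunc H' M z = (M : ℂ) • z := by
    intro z hz
    rw [etrunc_apply, specProj_compl H' hH' hM z, hz, sub_zero, map_zero, zero_add]
  have hPz : ∀ v : V, specProj H' (Set.Ioo (-M) M)
      (v - specProj H' (Set.Ioo (-M) M) v) = 0 := by
    intro v
    rw [map_sub, specProj_idem H' hH' (Set.Ioo (-M) M) v, sub_self]
  set Hb := etrunc H' M + B with hHbdef
  set Q := specProj Hb (Set.Icc (ξ - ε) (ξ + ε)) with hQdef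
  set P := specProj (H' + B) (Set.Ioo (ξ - δ) (ξ + δ)) with hPdef
  set P' := specProj H' (Set.Ioo (-M) M) with hP'def
  by_cases hQ0 : Q = 0
  · rw [hQ0]
    simp only [mul_zero, norm_zero, add_zero]
    positivity
  · obtain ⟨x₀, hx₀⟩ : ∃ x, Q x ≠ 0 := by
      by_contra hc
      push_neg at hc
      exact hQ0 (ContinuousLinearMap.ext fun x => hc x)
    -- scalar nonnegativity
    have hCε : 0 ≤ M + ‖B‖ + |ξ| + ε := by
      rcases le_or_gt 0 M with h | h
      · have := norm_nonneg B; have := abs_nonneg ξ; linarith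
      · have hP'0 : P' = 0 := specProj_empty H' (Set.Ioo_eq_empty (by linarith))
        have h1 : Hb (Q x₀) = (M : ℂ) • Q x₀ + B (Q x₀) := by
          rw [hHbdef, ContinuousLinearMap.add_apply, hE2 (Q x₀) (by simp [hP'0])]
        have h2 : ‖Hb (Q x₀) - (ξ : ℂ) • Q x₀‖ ≤ ε * ‖Q x₀‖ := icc_bound Hb hHbsa hε x₀
        have h3 : |M - ξ| * ‖Q x₀‖ ≤ ε * ‖Q x₀‖ + ‖B‖ * ‖Q x₀‖ := by
          have e : ((M : ℂ) - ξ) • Q x₀ = (Hb (Q x₀) - (ξ : ℂ) • Q x₀) - B (Q x₀) := by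
            rw [h1]; module
          calc |M - ξ| * ‖Q x₀‖ = ‖((M : ℂ) - ξ) • Q x₀‖ := by
                rw [norm_smul, ← Complex.ofReal_sub, Complex.norm_real, Real.norm_eq_abs]
            _ ≤ ‖Hb (Q x₀) - (ξ : ℂ) • Q x₀‖ + ‖B (Q x₀)‖ := by
                rw [e]; exact norm_sub_le _ _
            _ ≤ ε * ‖Q x₀‖ + ‖B‖ * ‖Q x₀‖ := add_le_add h2 (B.le_opNorm _)
        have hq : 0 < ‖Q x₀‖ := norm_pos_iff.2 hx₀
        have h4 : |M - ξ| ≤ ε + ‖B‖ := by nlinarith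
        have h5 := abs_sub_abs_le_abs_sub M ξ
        have h6 : |M| = -M := abs_of_neg h
        linarith
    have hC : 0 ≤ M + ‖B‖ + |ξ| + δ := by linarith
    -- pointwise key bound
    have key : ∀ x : V, δ * ‖Q x - P (Q x)‖ ≤
        ε * ‖Q x‖ + (M + ‖B‖ + |ξ| + δ) * ‖Q x - P' (Q x)‖ := by
      intro x
      rcases le_or_gt 0 M with hMpos | hMneg
      · have h2 : ‖Q x - P (Q x)‖ ≤
            ‖P' (Q x) - P (P' (Q x))‖ + ‖Q x - P' (Q x)‖ := by
          have e : Q x - P (Q x) = (P' (Q x) - P (P' (Q x))) +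
              ((Q x - P' (Q x)) - P (Q x - P' (Q x))) := by
            rw [map_sub]; abel
          rw [e]
          exact (norm_add_le _ _).trans
            (add_le_add le_rfl (norm_sub_specProj_le (H' + B) hHsa _ _))
        have h3 : ‖P' (Q x) - P (P' (Q x))‖ ≤
            (1 / δ) * ‖(H' + B) (P' (Q x)) - (ξ : ℂ) • P' (Q x)‖ :=
          gap_bound (H' + B) hHsa hδ (P' (Q x))
        have h4 : (H' + B) (P' (Q x)) = Hb (P' (Q x)) := by
          rw [hHbdef, ContinuousLinearMap.add_apply, ContinuousLinearMap.add_apply, hE1 (Q x)]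
        have h5 : Hb (P' (Q x)) - (ξ : ℂ) • P' (Q x) =
            (Hb (Q x) - (ξ : ℂ) • Q x) -
            (Hb (Q x - P' (Q x)) - (ξ : ℂ) • (Q x - P' (Q x))) := by
          have e : P' (Q x) = Q x - (Q x - P' (Q x)) := by abel
          rw [e, map_sub, smul_sub]
          abel
        have h6 : ‖Hb (Q x) - (ξ : ℂ) • Q x‖ ≤ ε * ‖Q x‖ := icc_bound Hb hHbsa hε x
        have h7 : Hb (Q x - P' (Q x)) =
            (M : ℂ) • (Q x - P' (Q x)) + B (Q x - P' (Q x)) := by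
          rw [hHbdef, ContinuousLinearMap.add_apply, hE2 _ (hPz (Q x))]
        have h8 : ‖Hb (Q x - P' (Q x)) - (ξ : ℂ) • (Q x - P' (Q x))‖ ≤
            (|M - ξ| + ‖B‖) * ‖Q x - P' (Q x)‖ := by
          rw [h7]
          have e : (M : ℂ) • (Q x - P' (Q x)) + B (Q x - P' (Q x)) -
              (ξ : ℂ) • (Q x - P' (Q x)) =
              ((M : ℂ) - ξ) • (Q x - P' (Q x)) + B (Q x - P' (Q x)) := by module
          rw [e]
          calc ‖_‖ ≤ ‖((M : ℂ) - ξ) • (Q x - P' (Q x))‖ + ‖B (Q x - P' (Q x))‖ :=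
                norm_add_le _ _
            _ ≤ |M - ξ| * ‖Q x - P' (Q x)‖ + ‖B‖ * ‖Q x - P' (Q x)‖ := by
                rw [norm_smul, ← Complex.ofReal_sub, Complex.norm_real, Real.norm_eq_abs]
                exact add_le_add le_rfl (B.le_opNorm _)
            _ = (|M - ξ| + ‖B‖) * ‖Q x - P' (Q x)‖ := by ring
        have habs : |M - ξ| ≤ M + |ξ| := by
          have := abs_sub M ξ
          rw [abs_of_nonneg hMpos] at this
          exact this
        have h9 : ‖(H' + B) (P' (Q x)) - (ξ : ℂ) • P' (Q x)‖ ≤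
            ε * ‖Q x‖ + (|M - ξ| + ‖B‖) * ‖Q x - P' (Q x)‖ := by
          rw [h4, h5]
          exact (norm_sub_le _ _).trans (add_le_add h6 h8)
        have hfin : δ * ((1 / δ) * ‖(H' + B) (P' (Q x)) - (ξ : ℂ) • P' (Q x)‖) =
            ‖(H' + B) (P' (Q x)) - (ξ : ℂ) • P' (Q x)‖ := by
          field_simp
        calc δ * ‖Q x - P (Q x)‖
            ≤ δ * (‖P' (Q x) - P (P' (Q x))‖ + ‖Q x - P' (Q x)‖) :=
              mul_le_mul_of_nonneg_left h2 hδ.le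
          _ = δ * ‖P' (Q x) - P (P' (Q x))‖ + δ * ‖Q x - P' (Q x)‖ := by ring
          _ ≤ δ * ((1 / δ) * ‖(H' + B) (P' (Q x)) - (ξ : ℂ) • P' (Q x)‖) +
              δ * ‖Q x - P' (Q x)‖ := by
              have := mul_le_mul_of_nonneg_left h3 hδ.le
              linarith
          _ = ‖(H' + B) (P' (Q x)) - (ξ : ℂ) • P' (Q x)‖ + δ * ‖Q x - P' (Q x)‖ := by
              rw [hfin]
          _ ≤ (ε * ‖Q x‖ + (|M - ξ| + ‖B‖) * ‖Q x - P' (Q x)‖) +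
              δ * ‖Q x - P' (Q x)‖ := by linarith
          _ ≤ ε * ‖Q x‖ + (M + ‖B‖ + |ξ| + δ) * ‖Q x - P' (Q x)‖ := by
              nlinarith [mul_le_mul_of_nonneg_right habs (norm_nonneg (Q x - P' (Q x)))]
      · have hP'0 : P' = 0 := specProj_empty H' (Set.Ioo_eq_empty (by linarith))
        have hzy : Q x - P' (Q x) = Q x := by rw [hP'0]; simp
        have h1 : ‖Q x - P (Q x)‖ ≤ ‖Q x‖ := norm_sub_specProj_le (H' + B) hHsa _ (Q x)
        rw [hzy]
        nlinarith [norm_nonneg (Q x), mul_le_mul_of_nonneg_left h1 hδ.le]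
    -- conclude
    refine ContinuousLinearMap.opNorm_le_bound _ ?_ ?_
    · have h0 : (0:ℝ) ≤ ‖((1 : V →L[ℂ] V) - P') * Q‖ := norm_nonneg _
      have h1 : (0:ℝ) ≤ 1 / δ := by positivity
      exact mul_nonneg h1 (add_nonneg hε (mul_nonneg hC h0))
    · intro x
      have hk := key x
      have h1 : ‖Q x‖ ≤ ‖x‖ := norm_specProj_apply_le Hb _ x
      have e2 : (((1 : V →L[ℂ] V) - P') * Q) x = Q x - P' (Q x) := by
        rw [ContinuousLinearMap.mul_apply, ContinuousLinearMap.sub_apply,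
          ContinuousLinearMap.one_apply]
      have h2 : ‖Q x - P' (Q x)‖ ≤ ‖((1 : V →L[ℂ] V) - P') * Q‖ * ‖x‖ := by
        rw [← e2]
        exact ContinuousLinearMap.le_opNorm _ x
      have hAx : (((1 : V →L[ℂ] V) - P) * Q) x = Q x - P (Q x) := by
        rw [ContinuousLinearMap.mul_apply, ContinuousLinearMap.sub_apply,
          ContinuousLinearMap.one_apply]
      have hmain : δ * ‖(((1 : V →L[ℂ] V) - P) * Q) x‖ ≤
          ε * ‖x‖ + (M + ‖B‖ + |ξ| + δ) * (‖((1 : V →L[ℂ] V) - P') * Q‖ * ‖x‖) := by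
        rw [hAx]
        refine hk.trans (add_le_add (mul_le_mul_of_nonneg_left h1 hε) ?_)
        exact mul_le_mul_of_nonneg_left h2 hC
      calc ‖(((1 : V →L[ℂ] V) - P) * Q) x‖
          = (1 / δ) * (δ * ‖(((1 : V →L[ℂ] V) - P) * Q) x‖) := by
            rw [← mul_assoc, one_div, inv_mul_cancel₀ hδ.ne', one_mul]
        _ ≤ (1 / δ) * (ε * ‖x‖ + (M + ‖B‖ + |ξ| + δ) *
              (‖((1 : V →L[ℂ] V) - P') * Q‖ * ‖x‖)) :=
            mul_le_mul_of_nonneg_left hmain (by positivity)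
        _ = (1 / δ) * (ε + (M + ‖B‖ + |ξ| + δ) *
              ‖((1 : V →L[ℂ] V) - P') * Q‖) * ‖x‖ := by ring
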